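/- (Rational instanton solutions, Section 4.) Let m = 2l + 1 be an odd positive integer. Then the functions ψ₁(z) = √m · zᵐ z̄ˡ / (1 + |z|^{2m}) and ψ₂(z) = √m · zˡ / (1 + |z|^{2m}) solve the generalized Weierstrass–Enneper system ∂ψ₁ = p ψ₂, ∂̄ψ₂ = −p ψ₁ on all of ℂ, where p = |ψ₁|² + |ψ₂|²; in fact p(z) = m |z|^{m−1} / (1 + |z|^{2m}). -/

import Mathlib

open Complex

/-- The Wirtinger derivative ∂f = (1/2)(∂f/∂x − i ∂f/∂y) of a real-differentiable
function `f : ℂ → ℂ`. -/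
noncomputable def wD (f : ℂ → ℂ) (z : ℂ) : ℂ :=
  (1 / 2 : ℂ) * (fderiv ℝ f z 1 - Complex.I * fderiv ℝ f z Complex.I)

/-- The conjugate Wirtinger derivative ∂̄f = (1/2)(∂f/∂x + i ∂f/∂y). -/
noncomputable def wDbar (f : ℂ → ℂ) (z : ℂ) : ℂ :=
  (1 / 2 : ℂ) * (fderiv ℝ f z 1 + Complex.I * fderiv ℝ f z Complex.I)

noncomputable def wrepL (a b : ℂ) : ℂ →L[ℝ] ℂ :=
  a • ContinuousLinearMap.id ℝ ℂ + b • (Complex.conjCLE.toContinuousLinearMap)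

@[simp] lemma wrepL_apply (a b v : ℂ) : wrepL a b v = a * v + b * (starRingEnd ℂ) v := by
  simp [wrepL, smul_eq_mul]

def Wrep (f : ℂ → ℂ) (z a b : ℂ) : Prop := HasFDerivAt f (wrepL a b) z

lemma wrep_id (z : ℂ) : Wrep (fun z => z) z 1 0 :=
  (hasFDerivAt_id z).congr_fderiv (by ext v; simp)

lemma wrep_conj (z : ℂ) : Wrep (fun z => (starRingEnd ℂ) z) z 0 1 :=
  (Complex.conjCLE.hasFDerivAt (x := z)).congr_fderiv (by ext v; simp)

lemma wrep_const (c z : ℂ) : Wrep (fun _ => c) z 0 0 :=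
  (hasFDerivAt_const c z).congr_fderiv (by ext v; simp)

lemma Wrep.add {f g : ℂ → ℂ} {z a b a' b' : ℂ} (hf : Wrep f z a b) (hg : Wrep g z a' b') :
    Wrep (fun z => f z + g z) z (a + a') (b + b') :=
  (HasFDerivAt.add hf hg).congr_fderiv (by ext v; simp; ring)

lemma Wrep.mul {f g : ℂ → ℂ} {z a b a' b' : ℂ} (hf : Wrep f z a b) (hg : Wrep g z a' b') :
    Wrep (fun z => f z * g z) z (a * g z + f z * a') (b * g z + f z * b') :=
  (HasFDerivAt.mul hf hg).congr_fderiv (by ext v; simp [smul_eq_mul]; ring)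

lemma Wrep.of_eq {f : ℂ → ℂ} {z a b a' b' : ℂ} (h : Wrep f z a b) (ha : a = a')
    (hb : b = b') : Wrep f z a' b' := ha ▸ hb ▸ h

lemma Wrep.pow {f : ℂ → ℂ} {z a b : ℂ} (hf : Wrep f z a b) (n : ℕ) :
    Wrep (fun z => f z ^ n) z (n * f z ^ (n - 1) * a) (n * f z ^ (n - 1) * b) := by
  induction n with
  | zero => simpa using wrep_const 1 z
  | succ n ih =>
    have h := ih.mul hf
    simp only [pow_succ] at h ⊢
    refine h.of_eq ?_ ?_ <;>
      rcases n with _ | n <;> push_cast <;> ring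

lemma Wrep.inv {f : ℂ → ℂ} {z a b : ℂ} (hf : Wrep f z a b) (h0 : f z ≠ 0) :
    Wrep (fun z => (f z)⁻¹) z (-(a / f z ^ 2)) (-(b / f z ^ 2)) := by
  have h := ((hasFDerivAt_inv h0).restrictScalars ℝ).comp z hf
  exact h.congr_fderiv (by ext v; simp [smul_eq_mul]; field_simp; ring)

lemma Wrep.wD_eq {f : ℂ → ℂ} {z a b : ℂ} (h : Wrep f z a b) : wD f z = a := by
  rw [wD, h.fderiv]
  simp [Complex.ext_iff]; ring_nf; simp [Complex.ext_iff]

lemma Wrep.wDbar_eq {f : ℂ → ℂ} {z a b : ℂ} (h : Wrep f z a b) : wDbar f z = b := by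
  rw [wDbar, h.fderiv]
  simp [Complex.ext_iff]; ring_nf; simp [Complex.ext_iff]

/-- rational instanton solutions: for an odd positive integer m = 2l + 1,
the functions ψ₁(z) = √m zᵐ z̄ˡ / (1 + |z|^{2m}) and ψ₂(z) = √m zˡ / (1 + |z|^{2m})
solve the Weierstrass–Enneper system on ℂ, and p(z) = m |z|^{m−1} / (1 + |z|^{2m}). -/
theorem WE_rational_instanton (m l : ℕ) (hm : m = 2 * l + 1)
    (ψ₁ ψ₂ : ℂ → ℂ)
    (hψ₁ : ψ₁ = fun z => (Real.sqrt m : ℂ) * z ^ m * ((starRingEnd ℂ) z) ^ l /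
      (1 + ((Complex.normSq z : ℝ) : ℂ) ^ m))
    (hψ₂ : ψ₂ = fun z => (Real.sqrt m : ℂ) * z ^ l /
      (1 + ((Complex.normSq z : ℝ) : ℂ) ^ m)) :
    (∀ z : ℂ, wD ψ₁ z =
      ((Complex.normSq (ψ₁ z) + Complex.normSq (ψ₂ z) : ℝ) : ℂ) * ψ₂ z) ∧
    (∀ z : ℂ, wDbar ψ₂ z =
      -((Complex.normSq (ψ₁ z) + Complex.normSq (ψ₂ z) : ℝ) : ℂ) * ψ₁ z) ∧
    (∀ z : ℂ, Complex.normSq (ψ₁ z) + Complex.normSq (ψ₂ z)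
      = m * ‖z‖ ^ (m - 1) / (1 + ‖z‖ ^ (2 * m))) := by
  subst hm
  set c : ℂ := (Real.sqrt ((2 * l + 1 : ℕ) : ℝ) : ℂ) with hcdef
  have hm1 : 1 ≤ (2 * l + 1) := by omega
  have hc : c * c = (((2 * l + 1 : ℕ)) : ℂ) := by
    rw [hcdef, ← Complex.ofReal_mul, Real.mul_self_sqrt (Nat.cast_nonneg (2 * l + 1))]
    norm_cast
  have hD : ∀ z : ℂ, (1 + (z * (starRingEnd ℂ) z) ^ (2 * l + 1)) ≠ 0 := by
    intro z
    rw [Complex.mul_conj]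
    have h1 : (0:ℝ) < 1 + Complex.normSq z ^ (2 * l + 1) :=
      add_pos_of_pos_of_nonneg one_pos (pow_nonneg (Complex.normSq_nonneg z) (2 * l + 1))
    intro h
    rw [show ((1:ℂ) + ((Complex.normSq z : ℝ):ℂ) ^ (2 * l + 1)) = (((1 + Complex.normSq z ^ (2 * l + 1) : ℝ)):ℂ) by
      push_cast; ring] at h
    exact absurd (Complex.ofReal_eq_zero.mp h) (ne_of_gt h1)
  have hψ₁' : ψ₁ = fun z => c * z ^ (2 * l + 1) * ((starRingEnd ℂ) z) ^ l *
      ((1 + (z * (starRingEnd ℂ) z) ^ (2 * l + 1))⁻¹) := by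
    rw [hψ₁]; funext z; rw [div_eq_mul_inv, Complex.mul_conj]
  have hψ₂' : ψ₂ = fun z => c * z ^ l *
      ((1 + (z * (starRingEnd ℂ) z) ^ (2 * l + 1))⁻¹) := by
    rw [hψ₂]; funext z; rw [div_eq_mul_inv, Complex.mul_conj]
  refine ⟨?_, ?_, ?_⟩
  · intro z
    have hw1 := (((wrep_const c z).mul ((wrep_id z).pow (2 * l + 1))).mul
        ((wrep_conj z).pow l)).mul
      ((((wrep_const 1 z).add (((wrep_id z).mul (wrep_conj z)).pow (2 * l + 1)))).inv (hD z))
    rw [hψ₁']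
    refine hw1.wD_eq.trans ?_
    rw [hψ₂']
    simp only [map_mul, map_pow, map_inv₀, Complex.normSq_conj]
    push_cast
    simp only [← Complex.mul_conj, map_mul, map_pow, map_add, map_one, map_inv₀,
      Complex.conj_conj, hcdef, Complex.conj_ofReal, Nat.add_sub_cancel]
    rw [← hcdef]
    have hD' : (1 + ((starRingEnd ℂ) z * z) ^ (2 * l + 1)) ≠ 0 := by
      rw [mul_comm]; exact hD z
    field_simp [hD z, hD']
    rw [show c ^ 3 = c * (c * c) by ring, hc]
    push_cast
    ring
  · intro z
    have hw2 := ((wrep_const c z).mul ((wrep_id z).pow l)).mul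
      ((((wrep_const 1 z).add (((wrep_id z).mul (wrep_conj z)).pow (2 * l + 1)))).inv (hD z))
    rw [hψ₂']
    refine hw2.wDbar_eq.trans ?_
    rw [hψ₁']
    simp only [map_mul, map_pow, map_inv₀, Complex.normSq_conj]
    push_cast
    simp only [← Complex.mul_conj, map_mul, map_pow, map_add, map_one, map_inv₀,
      Complex.conj_conj, hcdef, Complex.conj_ofReal, Nat.add_sub_cancel]
    rw [← hcdef]
    have hD' : (1 + ((starRingEnd ℂ) z * z) ^ (2 * l + 1)) ≠ 0 := by
      rw [mul_comm]; exact hD z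
    field_simp [hD z, hD']
    rw [show c ^ 3 = c * (c * c) by ring, hc]
    push_cast
    ring
  · intro z
    have hcast : (1:ℂ) + ((Complex.normSq z : ℝ):ℂ) ^ (2 * l + 1)
        = (((1 + Complex.normSq z ^ (2 * l + 1)) : ℝ) : ℂ) := by push_cast; ring
    have hnc : Complex.normSq c = ((2 * l + 1 : ℕ) : ℝ) := by
      rw [hcdef, Complex.normSq_ofReal, Real.mul_self_sqrt (Nat.cast_nonneg _)]
    have habs1 : ‖z‖ ^ (2 * l + 1 - 1) = Complex.normSq z ^ l := by
      rw [show 2 * l + 1 - 1 = 2 * l from rfl, pow_mul, Complex.sq_norm]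
    have habs2 : ‖z‖ ^ (2 * (2 * l + 1)) = Complex.normSq z ^ (2 * l + 1) := by
      rw [pow_mul, Complex.sq_norm]
    have hd : (1 : ℝ) + Complex.normSq z ^ (2 * l + 1) ≠ 0 :=
      ne_of_gt (add_pos_of_pos_of_nonneg one_pos (pow_nonneg (Complex.normSq_nonneg z) _))
    rw [hψ₁, hψ₂]
    simp only [hcast, map_div₀, map_mul, map_pow, Complex.normSq_conj,
      Complex.normSq_ofReal, hnc, habs1, habs2]
    field_simp
    ring
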